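/- (Deterministic server-message counting) In the secure aggregation with an oblivious server model, assume correctness holds almost surely. Then for every user k ∈ [K], every key realization (z_1,…,z_K) in the support of (Z_1,…,Z_K), and every fixed w_k ∈ (F_q)^L, the map f sending (w_u)_{u∈[K]\{k}} to ψ_k(φ_1(w_1,z_1), …, φ_K(w_K,z_K)) satisfies: whenever f((w_u)_{u≠k}) = f((w'_u)_{u≠k}), then Σ_{u≠k} w_u = Σ_{u≠k} w'_u. In particular the image of f has at least q^L elements, so q^{L_Y} ≥ q^L, i.e., L_Y ≥ L. -/
import Mathlib


open Classical
open scoped BigOperators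

/-- Probability of the event `E` under the probability mass function `p`
on a finite sample space `Ω`. -/
noncomputable def pr {Ω : Type*} [Fintype Ω] (p : Ω → ℝ) (E : Ω → Prop) : ℝ :=
  ∑ ω, if E ω then p ω else 0

/-- Shannon entropy of the random variable `X` in base-`q` units. -/
noncomputable def ent {Ω α : Type*} [Fintype Ω] [Fintype α] (q : ℕ) (p : Ω → ℝ)
    (X : Ω → α) : ℝ :=
  -∑ a, pr p (fun ω => X ω = a) * Real.logb q (pr p (fun ω => X ω = a))

/-- Conditional entropy `H(X | Y) = H(X, Y) − H(Y)`, base `q`. -/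
noncomputable def condEnt {Ω α β : Type*} [Fintype Ω] [Fintype α] [Fintype β]
    (q : ℕ) (p : Ω → ℝ) (X : Ω → α) (Y : Ω → β) : ℝ :=
  ent q p (fun ω => (X ω, Y ω)) - ent q p Y

/-- Mutual information `I(X ; Y) = H(X) + H(Y) − H(X, Y)`, base `q`. -/
noncomputable def mutInf {Ω α β : Type*} [Fintype Ω] [Fintype α] [Fintype β]
    (q : ℕ) (p : Ω → ℝ) (X : Ω → α) (Y : Ω → β) : ℝ :=
  ent q p X + ent q p Y - ent q p (fun ω => (X ω, Y ω))

/-- Conditional mutual information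
`I(X ; Y | Z) = H(X, Z) + H(Y, Z) − H(X, Y, Z) − H(Z)`, base `q`. -/
noncomputable def condMutInf {Ω α β γ : Type*} [Fintype Ω] [Fintype α] [Fintype β] [Fintype γ]
    (q : ℕ) (p : Ω → ℝ) (X : Ω → α) (Y : Ω → β) (Z : Ω → γ) : ℝ :=
  ent q p (fun ω => (X ω, Z ω)) + ent q p (fun ω => (Y ω, Z ω))
    - ent q p (fun ω => (X ω, Y ω, Z ω)) - ent q p Z

/-- **Deterministic server-message counting.** In the deterministic form of the
oblivious-server model, if correctness holds almost surely then for every user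
`k`, every key realization `z` in the support of `(Z_1, …, Z_K)` and every fixed
`w_k`, the map `f : (w_u)_{u ≠ k} ↦ ψ_k(φ_1(w_1, z_1), …, φ_K(w_K, z_K))`
separates the sums `Σ_{u ≠ k} w_u`: equal outputs force equal sums. In
particular the image of `f` has at least `q^L` elements, so `q^{L_Y} ≥ q^L`,
i.e. `L_Y ≥ L`. -/
theorem deterministic_server_message_counting
    (F : Type) [Field F] [Fintype F]
    (K L LX LY : ℕ) (hK : 2 ≤ K) (hL : 1 ≤ L)
    (Ω : Type) [Fintype Ω] (p : Ω → ℝ)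
    (hp0 : ∀ ω, 0 ≤ p ω) (hp1 : (∑ ω, p ω) = 1)
    (ZT : Fin K → Type) [∀ k, Fintype (ZT k)]
    (Z : (k : Fin K) → Ω → ZT k)
    -- deterministic encoders, server maps and decoders
    (φ : (k : Fin K) → (Fin L → F) → ZT k → Fin LX → F)
    (ψ : Fin K → (Fin K → Fin LX → F) → Fin LY → F)
    (dec : (k : Fin K) → (Fin LY → F) → (Fin L → F) → ZT k → Fin L → F)
    -- correctness with probability 1: for every key realization in the support of
    -- the keys and every input realization, user k decodes the sum
    (hCorr : ∀ (k : Fin K) (w : Fin K → Fin L → F) (z : (u : Fin K) → ZT u),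
      pr p (fun ω => ∀ u, Z u ω = z u) ≠ 0 →
      dec k (ψ k (fun u => φ u (w u) (z u))) (w k) (z k) = ∑ u, w u) :
    (∀ (k : Fin K) (z : (u : Fin K) → ZT u),
      pr p (fun ω => ∀ u, Z u ω = z u) ≠ 0 →
      ∀ (wk : Fin L → F) (w w' : Fin K → Fin L → F), w k = wk → w' k = wk →
        ψ k (fun u => φ u (w u) (z u)) = ψ k (fun u => φ u (w' u) (z u)) →
        (∑ u ∈ Finset.univ.erase k, w u) = ∑ u ∈ Finset.univ.erase k, w' u) ∧
    Fintype.card F ^ L ≤ Fintype.card F ^ LY ∧ L ≤ LY := by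
  have hFcard : 1 < Fintype.card F := Fintype.one_lt_card
  -- part 1
  have main : ∀ (k : Fin K) (z : (u : Fin K) → ZT u),
      pr p (fun ω => ∀ u, Z u ω = z u) ≠ 0 →
      ∀ (wk : Fin L → F) (w w' : Fin K → Fin L → F), w k = wk → w' k = wk →
        ψ k (fun u => φ u (w u) (z u)) = ψ k (fun u => φ u (w' u) (z u)) →
        (∑ u ∈ Finset.univ.erase k, w u) = ∑ u ∈ Finset.univ.erase k, w' u := by
    intro k z hz wk w w' hw hw' hψ
    have h1 := hCorr k w z hz
    have h2 := hCorr k w' z hz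
    rw [hψ, hw] at h1
    rw [hw'] at h2
    rw [h2] at h1
    have hs1 : (∑ u ∈ Finset.univ.erase k, w u) = (∑ u, w u) - w k :=
      Finset.sum_erase_eq_sub (Finset.mem_univ k)
    have hs2 : (∑ u ∈ Finset.univ.erase k, w' u) = (∑ u, w' u) - w' k :=
      Finset.sum_erase_eq_sub (Finset.mem_univ k)
    rw [hs1, hs2, h1, hw, hw']
  have hcard : Fintype.card F ^ L ≤ Fintype.card F ^ LY := by
    have hKpos : 0 < K := by omega
    have h1K : 1 < K := by omega
    set k : Fin K := ⟨0, hKpos⟩ with hk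
    set j : Fin K := ⟨1, h1K⟩ with hj
    have hjk : j ≠ k := by
      simp [hj, hk, Fin.ext_iff]
    -- find ω₀ with p ω₀ ≠ 0
    have hω₀ : ∃ ω₀, p ω₀ ≠ 0 := by
      by_contra h
      push_neg at h
      simp [h] at hp1
    obtain ⟨ω₀, hω₀⟩ := hω₀
    set z : (u : Fin K) → ZT u := fun u => Z u ω₀ with hzdef
    have hz : pr p (fun ω => ∀ u, Z u ω = z u) ≠ 0 := by
      have hle : p ω₀ ≤ pr p (fun ω => ∀ u, Z u ω = z u) := by
        have := Finset.single_le_sum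
          (f := fun ω => if (∀ u, Z u ω = z u) then p ω else 0)
          (fun ω _ => by by_cases h : (∀ u, Z u ω = z u) <;> simp [h, hp0 ω]) (Finset.mem_univ ω₀)
        simpa [pr, hzdef] using this
      have hpos : 0 < p ω₀ := lt_of_le_of_ne (hp0 ω₀) (Ne.symm hω₀)
      exact ne_of_gt (lt_of_lt_of_le hpos hle)
    -- injection
    set ws : (Fin L → F) → Fin K → Fin L → F :=
      fun s u => if u = j then s else 0 with hwsdef
    have hsum : ∀ s, (∑ u ∈ Finset.univ.erase k, ws s u) = s := by
      intro s
      rw [Finset.sum_eq_single j]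
      · simp [hwsdef]
      · intro b _ hb
        simp [hwsdef, hb]
      · intro hjmem
        exact absurd (Finset.mem_erase.mpr ⟨hjk, Finset.mem_univ j⟩) hjmem
    have hinj : Function.Injective
        (fun s : Fin L → F => ψ k (fun u => φ u (ws s u) (z u))) := by
      intro s s' hss
      have := main k z hz 0 (ws s) (ws s') (by simp [hwsdef, hjk.symm])
        (by simp [hwsdef, hjk.symm]) hss
      rw [hsum s, hsum s'] at this
      exact this
    have := Fintype.card_le_of_injective _ hinj
    simpa [Fintype.card_fun] using this
  exact ⟨main, hcard, (Nat.pow_le_pow_iff_right hFcard).mp hcard⟩
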